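/- Let W be real symmetric positive definite and T real symmetric invertible, α > 0, and set Z = W^{1/2} T⁻¹ W^{1/2} with spectral decomposition Z q_j = ξ_j q_j (q_j orthonormal). Then the complex matrix P⁻¹A, where P = i((α+1)/α)T and A = W + iT, has eigenvalues η_j = (α/(α+1))(1 − iξ_j) with eigenvectors x_j = W^{−1/2} q_j. -/

import Mathlib

open Matrix

/-- The square root of a positive semidefinite matrix, as defined in the older Mathlib
(removed since; re-stated here with its old definition). -/
noncomputable def Matrix.PosSemidef.sqrt {n 𝕜 : Type*} [Fintype n] [DecidableEq n] [RCLike 𝕜]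
    [PartialOrder 𝕜]    {A : Matrix n n 𝕜} (hA : A.PosSemidef) : Matrix n n 𝕜 :=
  hA.1.eigenvectorUnitary.1 * diagonal ((↑) ∘ (√·) ∘ hA.1.eigenvalues) *
    (star hA.1.eigenvectorUnitary : Matrix n n 𝕜)

lemma Matrix.PosSemidef.sqrt_mul_self' {n : ℕ} {A : Matrix (Fin n) (Fin n) ℝ}
    (hA : A.PosSemidef) : hA.sqrt * hA.sqrt = A := by
  have hsp := hA.1.spectral_theorem
  rw [Unitary.conjStarAlgAut_apply] at hsp
  set U := hA.1.eigenvectorUnitary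
  have hUU : (star U : Matrix (Fin n) (Fin n) ℝ) * U.1 = 1 := Unitary.coe_star_mul_self U
  unfold Matrix.PosSemidef.sqrt
  change U.1 * _ * (star U : Matrix (Fin n) (Fin n) ℝ) * (U.1 * _ * (star U : Matrix (Fin n) (Fin n) ℝ)) = A
  conv_rhs => rw [hsp]
  simp only [Matrix.mul_assoc]
  rw [← Matrix.mul_assoc (star U : Matrix (Fin n) (Fin n) ℝ) U.1, hUU, Matrix.one_mul,
    ← Matrix.mul_assoc (diagonal _), diagonal_mul_diagonal]
  congr 3
  funext i
  simp only [Function.comp_apply, RCLike.ofReal_real_eq_id, id]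
  exact Real.mul_self_sqrt (hA.eigenvalues_nonneg i)

lemma ofReal_comp_mulVec {n : ℕ} (M : Matrix (Fin n) (Fin n) ℝ) (v : Fin n → ℝ) :
    M.map Complex.ofReal *ᵥ (Complex.ofReal ∘ v) = (Complex.ofReal ∘ (M *ᵥ v)) := by
  funext i
  exact (RingHom.map_mulVec Complex.ofRealHom M v i).symm

theorem stmt_17 {n : ℕ} (W T : Matrix (Fin n) (Fin n) ℝ)
    (hW : W.PosDef) (hT : T.IsSymm) (hTinv : IsUnit T)
    (α : ℝ) (hα : 0 < α)
    (ξ : ℝ) (q : Fin n → ℝ) (hq : q ≠ 0)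
    (heig : (hW.posSemidef.sqrt * T⁻¹ * hW.posSemidef.sqrt) *ᵥ q = ξ • q) :
    ((((Complex.I * ((α + 1) / α)) • T.map Complex.ofReal)⁻¹ *
        (W.map Complex.ofReal + Complex.I • T.map Complex.ofReal)) *ᵥ
          (Complex.ofReal ∘ (hW.posSemidef.sqrt⁻¹ *ᵥ q)))
      = (((α : ℂ) / (α + 1)) * (1 - Complex.I * (ξ : ℂ))) •
          (Complex.ofReal ∘ (hW.posSemidef.sqrt⁻¹ *ᵥ q)) ∧
    (Complex.ofReal ∘ (hW.posSemidef.sqrt⁻¹ *ᵥ q)) ≠ 0 := by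
  set S := hW.posSemidef.sqrt with hSdef
  have hSS : S * S = W := hW.posSemidef.sqrt_mul_self'
  have hWdet : IsUnit W.det := isUnit_iff_ne_zero.mpr hW.det_pos.ne'
  have hSdet : IsUnit S.det := by
    have : IsUnit (S.det * S.det) := by rw [← det_mul, hSS]; exact hWdet
    exact isUnit_of_mul_isUnit_left this
  have hTdet : IsUnit T.det := (Matrix.isUnit_iff_isUnit_det T).mp hTinv
  have hSinv : S * S⁻¹ = 1 := mul_nonsing_inv S hSdet
  have hSinv' : S⁻¹ * S = 1 := nonsing_inv_mul S hSdet
  set x : Fin n → ℝ := S⁻¹ *ᵥ q with hxdef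
  -- real identities
  have hSx : S *ᵥ x = q := by
    rw [hxdef, mulVec_mulVec, hSinv, one_mulVec]
  have hWx : W *ᵥ x = S *ᵥ q := by
    rw [← hSS, ← mulVec_mulVec, hSx]
  have h2 : T⁻¹ *ᵥ (S *ᵥ q) = ξ • x := by
    have : S⁻¹ *ᵥ ((S * T⁻¹ * S) *ᵥ q) = S⁻¹ *ᵥ (ξ • q) := by rw [heig]
    rw [mulVec_mulVec] at this
    simp only [← Matrix.mul_assoc] at this
    rw [hSinv', Matrix.one_mul, ← mulVec_mulVec, mulVec_smul] at this
    rw [this, hxdef]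
  have h3 : T⁻¹ *ᵥ (T *ᵥ x) = x := by
    rw [mulVec_mulVec, nonsing_inv_mul T hTdet, one_mulVec]
  -- complex matrices
  set T' := T.map Complex.ofReal with hT'def
  have hT'det : IsUnit T'.det := by
    have : T'.det = (T.det : ℂ) := by
      rw [hT'def]; exact (RingHom.map_det Complex.ofRealHom T).symm
    rw [this]
    exact hTdet.map (Complex.ofRealHom : ℝ →+* ℂ).toMonoidHom
  have hT'inv : T'⁻¹ = T⁻¹.map Complex.ofReal := by
    have hTT : T⁻¹ * T = 1 := nonsing_inv_mul T hTdet
    refine inv_eq_left_inv ?_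
    ext i j
    simp only [hT'def, Matrix.mul_apply, Matrix.map_apply]
    rw [show (∑ k, ((T⁻¹ i k : ℝ):ℂ) * ((T k j : ℝ):ℂ))
        = (((∑ k, T⁻¹ i k * T k j : ℝ)):ℂ) by push_cast; ring]
    rw [← Matrix.mul_apply, hTT]
    simp [Matrix.one_apply, apply_ite]
  set c : ℂ := Complex.I * ((α + 1) / α) with hcdef
  have hαC : (α : ℂ) ≠ 0 := Complex.ofReal_ne_zero.mpr hα.ne'
  have hα1C : (α : ℂ) + 1 ≠ 0 := by
    have : (0:ℝ) < α + 1 := by linarith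
    simpa using Complex.ofReal_ne_zero.mpr this.ne'
  have hc : c ≠ 0 := by
    rw [hcdef]
    apply mul_ne_zero Complex.I_ne_zero
    exact div_ne_zero (by push_cast; exact hα1C) hαC
  haveI := invertibleOfNonzero hc
  have hPinv : (c • T')⁻¹ = c⁻¹ • T'⁻¹ := by
    refine inv_eq_left_inv ?_
    rw [Matrix.smul_mul, Matrix.mul_smul, smul_smul, inv_mul_cancel₀ hc,
      one_smul, nonsing_inv_mul T' hT'det]
  -- the vector
  set x' : Fin n → ℂ := Complex.ofReal ∘ x with hx'def
  have hxne : x ≠ 0 := by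
    intro h
    apply hq
    rw [← hSx, h, mulVec_zero]
  constructor
  · have key : (T'⁻¹ * (W.map Complex.ofReal + Complex.I • T')) *ᵥ x'
        = ((ξ : ℂ) + Complex.I) • x' := by
      rw [← mulVec_mulVec, add_mulVec, smul_mulVec, mulVec_add, mulVec_smul,
        hT'inv]
      have e1 : (W.map Complex.ofReal) *ᵥ x' = Complex.ofReal ∘ (W *ᵥ x) := by
        rw [hx'def, ofReal_comp_mulVec]
      have e2 : (T⁻¹.map Complex.ofReal) *ᵥ (Complex.ofReal ∘ (W *ᵥ x))
          = Complex.ofReal ∘ (T⁻¹ *ᵥ (W *ᵥ x)) := by rw [ofReal_comp_mulVec]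
      have e3 : T' *ᵥ x' = Complex.ofReal ∘ (T *ᵥ x) := by
        rw [hx'def, hT'def, ofReal_comp_mulVec]
      have e4 : (T⁻¹.map Complex.ofReal) *ᵥ (Complex.ofReal ∘ (T *ᵥ x))
          = Complex.ofReal ∘ (T⁻¹ *ᵥ (T *ᵥ x)) := by rw [ofReal_comp_mulVec]
      rw [e1, e2, e3, e4, hWx, h2, h3]
      funext i
      simp [hx'def, Complex.ofReal_mul]
      ring
    rw [hPinv, Matrix.smul_mul, smul_mulVec, key, smul_smul]
    congr 1
    rw [hcdef]
    field_simp
    ring_nf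
    rw [Complex.I_sq]
    ring
  · intro h
    apply hxne
    funext i
    have := congrFun h i
    simpa [hx'def, Complex.ofReal_eq_zero] using this
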